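/- Let E be a real Banach space, ε > 0, t₀ ≤ t₁ real numbers and set Δt = t₁ - t₀. Suppose F : ℝ → E is Lipschitz on [t₀, t₁] with Lipschitz constant L, and g : ℝ → E is differentiable on [t₀, t₁] with g'(t) = -(1/ε²)·g(t) - (1/ε)·F(t) for every t ∈ [t₀, t₁]. Then ‖g(t₁) - e^{-Δt/ε²}·g(t₀) + ε·(1 - e^{-Δt/ε²})·F(t₀)‖ ≤ L·Δt²/ε. -/

import Mathlib

theorem stmt_1 {E : Type*} [NormedAddCommGroup E] [NormedSpace ℝ E]
    (ε t₀ t₁ Δt : ℝ) (hε : 0 < ε) (ht : t₀ ≤ t₁) (hΔt : Δt = t₁ - t₀)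
    (L : NNReal) (F g : ℝ → E)
    (hF : LipschitzOnWith L F (Set.Icc t₀ t₁))
    (hg : ∀ t ∈ Set.Icc t₀ t₁,
      HasDerivAt g (-(1 / ε ^ 2) • g t - (1 / ε) • F t) t) :
    ‖g t₁ - Real.exp (-Δt / ε ^ 2) • g t₀
        + (ε * (1 - Real.exp (-Δt / ε ^ 2))) • F t₀‖
      ≤ L * Δt ^ 2 / ε := by
  have hΔt0 : 0 ≤ Δt := by simp [hΔt]; linarith
  set a : ℝ → ℝ := fun t => Real.exp ((t - t₀) / ε ^ 2) with ha
  set u : ℝ → E := fun t => a t • g t + (ε * (a t - 1)) • F t₀ with hu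
  have hεne : ε ≠ 0 := ne_of_gt hε
  have hader : ∀ t : ℝ, HasDerivAt a (a t * (1 / ε ^ 2)) t := by
    intro t
    have := (Real.hasDerivAt_exp ((t - t₀) / ε ^ 2)).comp t
      (((hasDerivAt_id t).sub_const t₀).div_const (ε ^ 2))
    simpa [ha, div_eq_mul_inv, Function.comp_def] using this
  have huder : ∀ t ∈ Set.Icc t₀ t₁,
      HasDerivAt u ((a t / ε) • (F t₀ - F t)) t := by
    intro t ht'
    have h2 := (hader t).smul (hg t ht')
    have h3 : HasDerivAt (fun t => (ε * (a t - 1)) • F t₀)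
        ((ε * (a t * (1 / ε ^ 2))) • F t₀) t :=
      (((hader t).sub_const 1).const_mul ε).smul_const (F t₀)
    have := h2.add h3
    convert this using 1
    · rfl
    simp only [smul_sub, smul_smul, smul_add, sub_smul, smul_neg]
    match_scalars <;> field_simp <;> ring
  set C : ℝ := Real.exp (Δt / ε ^ 2) * (L * Δt) / ε with hC
  have hbound : ∀ t ∈ Set.Icc t₀ t₁, ‖(a t / ε) • (F t₀ - F t)‖ ≤ C := by
    intro t ht'
    rw [norm_smul]
    have hat : 0 < a t := Real.exp_pos _
    have h1 : ‖F t₀ - F t‖ ≤ (L : ℝ) * Δt := by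
      have := hF.dist_le_mul t₀ (Set.left_mem_Icc.2 ht) t ht'
      rw [dist_eq_norm] at this
      refine this.trans ?_
      have : dist t₀ t ≤ Δt := by
        rw [Real.dist_eq, abs_sub_comm, abs_of_nonneg (by linarith [ht'.1])]
        linarith [ht'.2]
      nlinarith [this, L.coe_nonneg]
    have h2 : a t ≤ Real.exp (Δt / ε ^ 2) := by
      apply Real.exp_le_exp.2
      apply div_le_div_of_nonneg_right ?_ (by positivity)
      linarith [ht'.2]
    have h3 : ‖a t / ε‖ = a t / ε := abs_of_nonneg (by positivity)
    rw [h3, hC]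
    rw [div_mul_eq_mul_div]
    gcongr
  have hmvt : ‖u t₁ - u t₀‖ ≤ C * ‖t₁ - t₀‖ := by
    apply (convex_Icc t₀ t₁).norm_image_sub_le_of_norm_hasDerivWithin_le
      (fun t ht' => (huder t ht').hasDerivWithinAt) hbound
      (Set.left_mem_Icc.2 ht) (Set.right_mem_Icc.2 ht)
  have hexpne : Real.exp (Δt / ε ^ 2) ≠ 0 := (Real.exp_pos _).ne'
  have hkey : g t₁ - Real.exp (-Δt / ε ^ 2) • g t₀
      + (ε * (1 - Real.exp (-Δt / ε ^ 2))) • F t₀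
      = Real.exp (-Δt / ε ^ 2) • (u t₁ - u t₀) := by
    have ha1 : a t₁ = Real.exp (Δt / ε ^ 2) := by rw [ha]; simp [hΔt]
    have ha0 : a t₀ = 1 := by rw [ha]; simp
    have hneg : Real.exp (-Δt / ε ^ 2) = (Real.exp (Δt / ε ^ 2))⁻¹ := by
      rw [neg_div, Real.exp_neg]
    simp only [hu, ha1, ha0, hneg, smul_sub, smul_add, smul_smul]
    match_scalars <;> field_simp <;> ring
  rw [hkey, norm_smul, Real.norm_eq_abs, abs_of_pos (Real.exp_pos _)]
  calc Real.exp (-Δt / ε ^ 2) * ‖u t₁ - u t₀‖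
      ≤ Real.exp (-Δt / ε ^ 2) * (C * ‖t₁ - t₀‖) := by
        apply mul_le_mul_of_nonneg_left hmvt (Real.exp_pos _).le
    _ = (L : ℝ) * Δt ^ 2 / ε := by
        rw [hC, neg_div, Real.exp_neg]
        have : ‖t₁ - t₀‖ = Δt := by
          rw [Real.norm_eq_abs, ← hΔt, abs_of_nonneg hΔt0]
        rw [this]
        field_simp
  done
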